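/- Let A ⊂ ℝᵖ be a compact self-similar fractal fixed under M ≥ 2 similitudes with equal contraction ratio r, satisfying the open set condition, with d = log M / log(1/r) and s > d. Let 𝔐 = {M^k n : k ≥ 1} for a fixed n ≥ 2. Then the limit lim_{𝔐 ∋ N → ∞} ℰ_s(A, N)/N^{1+s/d} exists (and is finite). -/

import Mathlib

open Filter MeasureTheory Metric Real
open scoped BigOperators ENNReal NNReal Topology

open Classical in
noncomputable def rieszEnergy {E : Type*} [PseudoMetricSpace E] (s : ℝ) (ω : Finset E) : ℝ :=
  ∑ x ∈ ω, ∑ y ∈ ω, if x ≠ y then dist x y ^ (-s) else 0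

noncomputable def minRieszEnergy {E : Type*} [PseudoMetricSpace E] (s : ℝ) (A : Set E) (N : ℕ) : ℝ :=
  sInf {e : ℝ | ∃ ω : Finset E, ↑ω ⊆ A ∧ ω.card = N ∧ e = rieszEnergy s ω}

lemma rieszEnergy_nonneg {E : Type*} [PseudoMetricSpace E] (s : ℝ) (ω : Finset E) :
    0 ≤ rieszEnergy s ω := by
  refine Finset.sum_nonneg fun x _ => Finset.sum_nonneg fun y _ => ?_
  split
  · exact Real.rpow_nonneg dist_nonneg _
  · exact le_refl 0

lemma minRieszEnergy_bddBelow {E : Type*} [PseudoMetricSpace E] (s : ℝ) (A : Set E) (N : ℕ) :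
    BddBelow {e : ℝ | ∃ ω : Finset E, ↑ω ⊆ A ∧ ω.card = N ∧ e = rieszEnergy s ω} := by
  refine ⟨0, ?_⟩
  rintro e ⟨ω, -, -, rfl⟩
  exact rieszEnergy_nonneg s ω

lemma minRieszEnergy_nonneg {E : Type*} [PseudoMetricSpace E] (s : ℝ) (A : Set E) (N : ℕ) :
    0 ≤ minRieszEnergy s A N := by
  apply Real.sInf_nonneg
  rintro e ⟨ω, -, -, rfl⟩
  exact rieszEnergy_nonneg s ω

lemma psi_inj {E : Type*} [MetricSpace E] {r : ℝ} (hr : 0 < r) (f : E → E)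
    (hf : ∀ x y, dist (f x) (f y) = r * dist x y) : Function.Injective f := by
  intro x y h
  have h1 := hf x y
  rw [h, dist_self] at h1
  rcases mul_eq_zero.mp h1.symm with h2 | h2
  · exact absurd h2 hr.ne'
  · exact eq_of_dist_eq_zero h2

lemma energy_step {E : Type*} [MetricSpace E] (s r σ : ℝ) (hr : 0 < r) (hσ : 0 < σ)
    (hs : 0 < s) {M : ℕ} (A : Set E) (ψ : Fin M → E → E)
    (hψ : ∀ m x y, dist (ψ m x) (ψ m y) = r * dist x y)
    (hsub : ∀ m, ψ m '' A ⊆ A)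
    (hsep : ∀ i j, i ≠ j → ∀ x ∈ ψ i '' A, ∀ y ∈ ψ j '' A, σ ≤ dist x y)
    {N : ℕ} (ω : Finset E) (hωA : ↑ω ⊆ A) (hcard : ω.card = N) :
    ∃ Ω : Finset E, ↑Ω ⊆ A ∧ Ω.card = M * N ∧
      rieszEnergy s Ω ≤ (M : ℝ) * r ^ (-s) * rieszEnergy s ω
        + σ ^ (-s) * ((M : ℝ) * (N : ℝ)) ^ 2 := by
  classical
  have hinj : ∀ m, Function.Injective (ψ m) := fun m => psi_inj hr (ψ m) (hψ m)
  have hmemA : ∀ (m : Fin M), ∀ x ∈ ω, ψ m x ∈ ψ m '' A := by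
    intro m x hx
    exact ⟨x, hωA hx, rfl⟩
  set Ω : Finset E := Finset.univ.biUnion (fun m : Fin M => ω.image (ψ m)) with hΩ
  have hdisjF : ∀ i ∈ (Finset.univ : Finset (Fin M)), ∀ j ∈ (Finset.univ : Finset (Fin M)),
      i ≠ j → Disjoint (ω.image (ψ i)) (ω.image (ψ j)) := by
    intro i _ j _ hij
    rw [Finset.disjoint_left]
    rintro a ha hb
    obtain ⟨x, hx, rfl⟩ := Finset.mem_image.mp ha
    obtain ⟨y, hy, hxy⟩ := Finset.mem_image.mp hb
    have h1 := hsep i j hij (ψ i x) (hmemA i x hx) (ψ j y) (hmemA j y hy)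
    rw [hxy, dist_self] at h1
    exact absurd h1 (not_le.mpr hσ)
  have hpd : (↑(Finset.univ : Finset (Fin M)) : Set (Fin M)).PairwiseDisjoint
      (fun m : Fin M => ω.image (ψ m)) := fun i hi j hj hij => hdisjF i (by simp) j (by simp) hij
  refine ⟨Ω, ?_, ?_, ?_⟩
  · intro a ha
    simp only [hΩ, Finset.coe_biUnion, Finset.mem_coe, Finset.mem_biUnion] at ha
    obtain ⟨m, -, hm⟩ := Set.mem_iUnion₂.mp ha
    obtain ⟨x, hx, rfl⟩ := Finset.mem_image.mp hm
    exact hsub m (hmemA m x hx)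
  · rw [hΩ, Finset.card_biUnion hdisjF]
    simp [Finset.card_image_of_injective _ (hinj _), hcard, mul_comm]
  · -- energy bound
    set T : Fin M → Fin M → ℝ := fun i j => ∑ x ∈ ω, ∑ y ∈ ω,
      (if ψ i x ≠ ψ j y then dist (ψ i x) (ψ j y) ^ (-s) else 0) with hT
    have hsum : rieszEnergy s Ω = ∑ i : Fin M, ∑ j : Fin M, T i j := by
      simp only [hT]
      rw [rieszEnergy, hΩ, Finset.sum_biUnion hpd]
      refine Finset.sum_congr rfl fun i _ => ?_
      rw [Finset.sum_image (fun x _ y _ h => hinj i h)]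
      refine Eq.trans (Finset.sum_congr rfl fun x _ => ?_) Finset.sum_comm
      rw [Finset.sum_biUnion hpd]
      refine Finset.sum_congr rfl fun j _ => ?_
      rw [Finset.sum_image (fun a _ b _ h => hinj j h)]
    have hdiag : ∀ i, T i i = r ^ (-s) * rieszEnergy s ω := by
      intro i
      simp only [hT]
      rw [rieszEnergy, Finset.mul_sum]
      refine Finset.sum_congr rfl fun x _ => ?_
      rw [Finset.mul_sum]
      refine Finset.sum_congr rfl fun y _ => ?_
      by_cases hxy : x = y
      · subst hxy; simp
      · have hne : ψ i x ≠ ψ i y := (hinj i).ne hxy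
        simp only [hxy, hne, if_true, ne_eq, not_false_eq_true, if_pos]
        rw [hψ i x y, Real.mul_rpow hr.le dist_nonneg]
    have hoff : ∀ i j, i ≠ j → T i j ≤ (N : ℝ) * ((N : ℝ) * σ ^ (-s)) := by
      intro i j hij
      simp only [hT]
      have hterm : ∀ x ∈ ω, ∀ y ∈ ω,
          (if ψ i x ≠ ψ j y then dist (ψ i x) (ψ j y) ^ (-s) else 0) ≤ σ ^ (-s) := by
        intro x hx y hy
        split
        · refine Real.rpow_le_rpow_of_nonpos hσ ?_ (by linarith)
          exact hsep i j hij (ψ i x) (hmemA i x hx) (ψ j y) (hmemA j y hy)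
        · exact Real.rpow_nonneg hσ.le _
      calc T i j ≤ ω.card • ((N : ℝ) * σ ^ (-s)) := by
            refine Finset.sum_le_card_nsmul _ _ _ fun x hx => ?_
            calc (∑ y ∈ ω, if ψ i x ≠ ψ j y then dist (ψ i x) (ψ j y) ^ (-s) else 0)
                ≤ ω.card • σ ^ (-s) :=
                  Finset.sum_le_card_nsmul _ _ _ fun y hy => hterm x hx y hy
              _ = (N : ℝ) * σ ^ (-s) := by rw [nsmul_eq_mul, hcard]
        _ = (N : ℝ) * ((N : ℝ) * σ ^ (-s)) := by rw [nsmul_eq_mul, hcard]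
    have hσs : (0:ℝ) ≤ σ ^ (-s) := Real.rpow_nonneg hσ.le _
    calc rieszEnergy s Ω = ∑ i : Fin M, ∑ j : Fin M, T i j := hsum
      _ ≤ ∑ i : Fin M, (r ^ (-s) * rieszEnergy s ω + (M : ℝ) * ((N : ℝ) * ((N : ℝ) * σ ^ (-s)))) := by
          refine Finset.sum_le_sum fun i _ => ?_
          rw [← Finset.add_sum_erase _ _ (Finset.mem_univ i), hdiag i]
          refine add_le_add le_rfl ?_
          calc (∑ j ∈ Finset.univ.erase i, T i j)
              ≤ (Finset.univ.erase i).card • ((N : ℝ) * ((N : ℝ) * σ ^ (-s))) :=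
                Finset.sum_le_card_nsmul _ _ _ fun j hj =>
                  hoff i j (Ne.symm (Finset.ne_of_mem_erase hj))
            _ ≤ (M : ℝ) * ((N : ℝ) * ((N : ℝ) * σ ^ (-s))) := by
                rw [nsmul_eq_mul]
                have h1 : ((Finset.univ.erase i).card : ℝ) ≤ (M : ℝ) := by
                  have := Finset.card_erase_le (a := i) (s := (Finset.univ : Finset (Fin M)))
                  have h2 : (Finset.univ : Finset (Fin M)).card = M := by simp
                  exact_mod_cast le_trans this (le_of_eq h2)
                have h3 : (0:ℝ) ≤ (N : ℝ) * ((N : ℝ) * σ ^ (-s)) := by positivity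
                exact mul_le_mul_of_nonneg_right h1 h3
      _ = (M : ℝ) * (r ^ (-s) * rieszEnergy s ω)
            + (M : ℝ) * ((M : ℝ) * ((N : ℝ) * ((N : ℝ) * σ ^ (-s)))) := by
          rw [Finset.sum_const, Finset.card_univ, Fintype.card_fin, nsmul_eq_mul]
          ring
      _ = (M : ℝ) * r ^ (-s) * rieszEnergy s ω + σ ^ (-s) * ((M : ℝ) * (N : ℝ)) ^ 2 := by
          ring

lemma A_infinite {E : Type*} [MetricSpace E] (r σ : ℝ) (hr : 0 < r) (hσ : 0 < σ)
    {M : ℕ} (hM : 2 ≤ M) (A : Set E) (ψ : Fin M → E → E)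
    (hψ : ∀ m x y, dist (ψ m x) (ψ m y) = r * dist x y)
    (hsub : ∀ m, ψ m '' A ⊆ A)
    (hsep : ∀ i j, i ≠ j → ∀ x ∈ ψ i '' A, ∀ y ∈ ψ j '' A, σ ≤ dist x y)
    (hne : A.Nonempty) : A.Infinite := by
  classical
  by_contra hfin
  rw [Set.not_infinite] at hfin
  obtain ⟨a, ha⟩ := hne
  have h0 : (0 : ℕ) < M := by omega
  have h1 : (1 : ℕ) < M := by omega
  set i0 : Fin M := ⟨0, h0⟩
  set i1 : Fin M := ⟨1, h1⟩
  have hinj : ∀ m, Function.Injective (ψ m) := fun m => psi_inj hr (ψ m) (hψ m)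
  set F := hfin.toFinset with hF
  have hsubF : F.image (ψ i0) ⊆ F := by
    intro b hb
    obtain ⟨x, hx, rfl⟩ := Finset.mem_image.mp hb
    rw [hF, Set.Finite.mem_toFinset] at hx ⊢
    exact hsub i0 ⟨x, hx, rfl⟩
  have hcard : F.card ≤ (F.image (ψ i0)).card := by
    rw [Finset.card_image_of_injective _ (hinj i0)]
  have heq : F.image (ψ i0) = F := Finset.eq_of_subset_of_card_le hsubF hcard
  have hmem : ψ i1 a ∈ F := by
    rw [hF, Set.Finite.mem_toFinset]
    exact hsub i1 ⟨a, ha, rfl⟩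
  rw [← heq] at hmem
  obtain ⟨x, hx, hxa⟩ := Finset.mem_image.mp hmem
  have hne01 : i0 ≠ i1 := by
    intro h
    have : (0 : ℕ) = 1 := congrArg Fin.val h
    omega
  have hxA : x ∈ A := by rwa [hF, Set.Finite.mem_toFinset] at hx
  have := hsep i0 i1 hne01 (ψ i0 x) ⟨x, hxA, rfl⟩ (ψ i1 a) ⟨a, ha, rfl⟩
  rw [hxa, dist_self] at this
  exact absurd this (not_le.mpr hσ)

lemma min_step {E : Type*} [MetricSpace E] (s r σ : ℝ) (hr : 0 < r) (hσ : 0 < σ)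
    (hs : 0 < s) {M : ℕ} (hM0 : 0 < M) (A : Set E) (ψ : Fin M → E → E)
    (hψ : ∀ m x y, dist (ψ m x) (ψ m y) = r * dist x y)
    (hsub : ∀ m, ψ m '' A ⊆ A)
    (hsep : ∀ i j, i ≠ j → ∀ x ∈ ψ i '' A, ∀ y ∈ ψ j '' A, σ ≤ dist x y)
    (hAinf : A.Infinite) (N : ℕ) :
    minRieszEnergy s A (M * N) ≤ (M : ℝ) * r ^ (-s) * minRieszEnergy s A N
      + σ ^ (-s) * ((M : ℝ) * (N : ℝ)) ^ 2 := by
  classical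
  set S : Set ℝ := {e : ℝ | ∃ ω : Finset E, ↑ω ⊆ A ∧ ω.card = N ∧ e = rieszEnergy s ω} with hS
  have hSne : S.Nonempty := by
    obtain ⟨t, ht1, ht2⟩ := hAinf.exists_subset_card_eq N
    exact ⟨rieszEnergy s t, t, ht1, ht2, rfl⟩
  have hc : (0:ℝ) < (M : ℝ) * r ^ (-s) := by
    have : (0:ℝ) < (M:ℝ) := by exact_mod_cast hM0
    positivity
  have hkey : ∀ e ∈ S, minRieszEnergy s A (M * N) ≤ (M : ℝ) * r ^ (-s) * e
      + σ ^ (-s) * ((M : ℝ) * (N : ℝ)) ^ 2 := by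
    rintro e ⟨ω, hωA, hcard, rfl⟩
    obtain ⟨Ω, h1, h2, h3⟩ := energy_step s r σ hr hσ hs A ψ hψ hsub hsep ω hωA hcard
    have h4 : minRieszEnergy s A (M * N) ≤ rieszEnergy s Ω :=
      csInf_le (minRieszEnergy_bddBelow s A (M * N)) ⟨Ω, h1, h2, rfl⟩
    linarith
  have h5 : (minRieszEnergy s A (M * N) - σ ^ (-s) * ((M : ℝ) * (N : ℝ)) ^ 2)
      / ((M : ℝ) * r ^ (-s)) ≤ sInf S := by
    refine le_csInf hSne fun e he => ?_
    rw [div_le_iff₀ hc]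
    have := hkey e he
    nlinarith
  rw [div_le_iff₀ hc] at h5
  have h6 : sInf S = minRieszEnergy s A N := rfl
  nlinarith [h5, h6 ▸ h5]

/-- existence of the limit of normalized minimal energies along a
geometric subsequence M^k n. -/
theorem statement9 {p : ℕ} (s d r σ : ℝ) (M : ℕ) (hM : 2 ≤ M) (hr : 0 < r) (hr1 : r < 1)
    (hσ : 0 < σ) (A : Set (EuclideanSpace ℝ (Fin p))) (hA : IsCompact A)
    (ψ : Fin M → EuclideanSpace ℝ (Fin p) → EuclideanSpace ℝ (Fin p))
    (hψ : ∀ m x y, dist (ψ m x) (ψ m y) = r * dist x y)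
    (hfix : A = ⋃ m, ψ m '' A)
    (hsep : ∀ i j, i ≠ j → ∀ x ∈ ψ i '' A, ∀ y ∈ ψ j '' A, σ ≤ dist x y)
    (hosc : ∃ V : Set (EuclideanSpace ℝ (Fin p)), IsOpen V ∧ Bornology.IsBounded V ∧
      (⋃ m, ψ m '' V) ⊆ V ∧ Pairwise fun i j => Disjoint (ψ i '' V) (ψ j '' V))
    (hd : d = Real.log M / Real.log (1 / r)) (hsd : d < s)
    (n : ℕ) (hn : 2 ≤ n) :
    ∃ L : ℝ, Tendsto
      (fun k : ℕ => minRieszEnergy s A (M ^ (k + 1) * n) /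
        ((M ^ (k + 1) * n : ℕ) : ℝ) ^ (1 + s / d)) atTop (nhds L) := by
  classical
  have hNnat : ∀ k : ℕ, 0 < M ^ (k + 1) * n := by
    intro k
    have : 0 < M := by omega
    positivity
  rcases Set.eq_empty_or_nonempty A with rfl | hAne
  · refine ⟨0, ?_⟩
    have hf : (fun k : ℕ => minRieszEnergy s (∅ : Set (EuclideanSpace ℝ (Fin p)))
        (M ^ (k + 1) * n) / ((M ^ (k + 1) * n : ℕ) : ℝ) ^ (1 + s / d)) = fun _ => (0:ℝ) := by
      funext k
      have hempty : {e : ℝ | ∃ ω : Finset (EuclideanSpace ℝ (Fin p)),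
          ↑ω ⊆ (∅ : Set (EuclideanSpace ℝ (Fin p))) ∧ ω.card = M ^ (k + 1) * n ∧
          e = rieszEnergy s ω} = ∅ := by
        ext e
        simp only [Set.mem_setOf_eq, Set.mem_empty_iff_false, iff_false]
        rintro ⟨ω, hω, hcard, -⟩
        have : ω = ∅ := by
          rw [Finset.eq_empty_iff_forall_notMem]
          intro x hx
          exact (hω hx)
        rw [this, Finset.card_empty] at hcard
        exact absurd hcard.symm (hNnat k).ne'
      rw [minRieszEnergy, hempty, Real.sInf_empty, zero_div]
    rw [hf]
    exact tendsto_const_nhds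
  -- main case
  have hM0R : (0:ℝ) < (M:ℝ) := by exact_mod_cast (by omega : 0 < M)
  have hM1R : (1:ℝ) < (M:ℝ) := by exact_mod_cast (by omega : 1 < M)
  have hlogM : 0 < Real.log M := Real.log_pos hM1R
  have hlogr : 0 < Real.log (1 / r) := Real.log_pos (one_lt_one_div hr hr1)
  have hd0 : 0 < d := by rw [hd]; exact div_pos hlogM hlogr
  have hs0 : 0 < s := lt_trans hd0 hsd
  have hlogrne : Real.log r ≠ 0 := (Real.log_neg hr hr1).ne
  have hrs : r ^ (-s) = (M:ℝ) ^ (s / d) := by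
    rw [Real.rpow_def_of_pos hr, Real.rpow_def_of_pos hM0R]
    congr 1
    have hlr : Real.log (1 / r) = -Real.log r := by rw [one_div, Real.log_inv]
    rw [hd, hlr]
    field_simp
  -- constants
  set α : ℝ := 1 - s / d with hα
  have hαneg : α < 0 := by
    have : 1 < s / d := (one_lt_div hd0).mpr hsd
    simp only [hα]; linarith
  set ρ : ℝ := (M:ℝ) ^ α with hρ
  have hρ0 : 0 < ρ := Real.rpow_pos_of_pos hM0R α
  have hρ1 : ρ < 1 := Real.rpow_lt_one_of_one_lt_of_neg hM1R hαneg
  have hn0R : (0:ℝ) < (n:ℝ) := by exact_mod_cast (by omega : 0 < n)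
  set C : ℝ := σ ^ (-s) * (((M:ℝ) ^ 2 * (n:ℝ)) ^ α) with hC
  have hC0 : 0 ≤ C := by
    have := Real.rpow_nonneg hσ.le (-s)
    have h2 : (0:ℝ) ≤ ((M:ℝ) ^ 2 * (n:ℝ)) ^ α := Real.rpow_nonneg (by positivity) α
    positivity
  set c : ℝ := C / (1 - ρ) with hc
  have hc0 : 0 ≤ c := div_nonneg hC0 (by linarith)
  -- infiniteness and step inequality
  have hsub : ∀ m, ψ m '' A ⊆ A := fun m =>
    (Set.subset_iUnion (fun m => ψ m '' A) m).trans hfix.symm.subset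
  have hAinf : A.Infinite := A_infinite r σ hr hσ hM A ψ hψ hsub hsep hAne
  have hstep := min_step s r σ hr hσ hs0 (by omega : 0 < M) A ψ hψ hsub hsep hAinf
  set f : ℕ → ℝ := fun k : ℕ => minRieszEnergy s A (M ^ (k + 1) * n) /
      ((M ^ (k + 1) * n : ℕ) : ℝ) ^ (1 + s / d) with hfdef
  have hfnn : ∀ k, 0 ≤ f k := by
    intro k
    simp only [hfdef]
    exact div_nonneg (minRieszEnergy_nonneg _ _ _) (Real.rpow_nonneg (Nat.cast_nonneg _) _)
  have hkey : ∀ k, f (k + 1) ≤ f k + C * ρ ^ k := by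
    intro k
    simp only [hfdef]
    set N : ℕ := M ^ (k + 1) * n with hN
    have hMN : M ^ (k + 1 + 1) * n = M * N := by rw [hN]; ring
    have hNposR : (0:ℝ) < ((N:ℕ):ℝ) := by exact_mod_cast hNnat k
    have hMNposR : (0:ℝ) < ((M * N : ℕ):ℝ) := by
      have := hNnat k
      exact_mod_cast Nat.mul_pos (by omega) (hNnat k)
    have hden : ((M * N : ℕ):ℝ) ^ (1 + s / d) = (M:ℝ) ^ (1 + s / d) * ((N:ℕ):ℝ) ^ (1 + s / d) := by
      push_cast
      rw [Real.mul_rpow hM0R.le (Nat.cast_nonneg N)]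
    have hMq : (M:ℝ) * r ^ (-s) = (M:ℝ) ^ (1 + s / d) := by
      rw [hrs, Real.rpow_add hM0R, Real.rpow_one]
    have hq0 : (0:ℝ) < ((M * N : ℕ):ℝ) ^ (1 + s / d) := Real.rpow_pos_of_pos hMNposR _
    rw [hMN]
    calc minRieszEnergy s A (M * N) / ((M * N : ℕ):ℝ) ^ (1 + s / d)
        ≤ ((M : ℝ) * r ^ (-s) * minRieszEnergy s A N
            + σ ^ (-s) * ((M : ℝ) * (N : ℝ)) ^ 2) / ((M * N : ℕ):ℝ) ^ (1 + s / d) := by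
          exact div_le_div_of_nonneg_right (hstep N) hq0.le
      _ = minRieszEnergy s A N / ((N:ℕ):ℝ) ^ (1 + s / d)
            + σ ^ (-s) * ((M * N : ℕ):ℝ) ^ α := by
          have hD : ((M * N : ℕ):ℝ) = (M:ℝ) * (N:ℝ) := by push_cast; ring
          rw [hMq, add_div]
          congr 1
          · rw [hden]
            exact mul_div_mul_left _ _ (Real.rpow_pos_of_pos hM0R _).ne'
          · rw [← hD, mul_div_assoc]
            congr 1
            rw [← Real.rpow_natCast (((M * N : ℕ):ℝ)) 2, ← Real.rpow_sub hMNposR]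
            congr 1
            rw [hα]
            push_cast
            ring
      _ ≤ minRieszEnergy s A N / ((N:ℕ):ℝ) ^ (1 + s / d) + C * ρ ^ k := by
          refine add_le_add le_rfl (le_of_eq ?_)
          have hcast : ((M * N : ℕ):ℝ) = (M:ℝ) ^ 2 * (n:ℝ) * ((M:ℝ) ^ k) := by
            rw [hN]; push_cast; ring
          rw [hcast, Real.mul_rpow (by positivity) (by positivity), hC]
          rw [mul_assoc]
          congr 1
          rw [← Real.rpow_natCast (M:ℝ) k, ← Real.rpow_mul hM0R.le, mul_comm ((k:ℕ):ℝ) α,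
            Real.rpow_mul hM0R.le, Real.rpow_natCast, hρ]
  -- convergence
  set b : ℕ → ℝ := fun k => f k + c * ρ ^ k with hb
  have hcC : c * (1 - ρ) = C := div_mul_cancel₀ C (by linarith : (1:ℝ) - ρ ≠ 0)
  have hb_anti : Antitone b := by
    refine antitone_nat_of_succ_le fun k => ?_
    simp only [hb]
    have h1 := hkey k
    have h2 : (0:ℝ) ≤ ρ ^ k := pow_nonneg hρ0.le k
    have h3 : ρ ^ (k + 1) = ρ ^ k * ρ := pow_succ ρ k
    nlinarith [h1, h2, h3, hcC]
  have hb_bdd : BddBelow (Set.range b) := by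
    refine ⟨0, ?_⟩
    rintro x ⟨k, rfl⟩
    simp only [hb]
    have := hfnn k
    have h2 : (0:ℝ) ≤ c * ρ ^ k := mul_nonneg hc0 (pow_nonneg hρ0.le k)
    linarith
  have hbt := tendsto_atTop_ciInf hb_anti hb_bdd
  have hgt : Tendsto (fun k : ℕ => c * ρ ^ k) atTop (nhds 0) := by
    have := (tendsto_pow_atTop_nhds_zero_of_lt_one hρ0.le hρ1).const_mul c
    simpa using this
  refine ⟨⨅ k, b k, ?_⟩
  have hfb : f = fun k => b k - c * ρ ^ k := by
    funext k
    simp only [hb]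
    ring
  rw [hfb]
  simpa using hbt.sub hgt
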